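/- arXiv:1605.03854 — 2 statements merged into one kernel-verified Lean document; each statement's English description precedes it below -/
import Mathlib

section
/- Let V be a real vector space of dimension k + 2ℓ, let α₁,…,α_k be linearly independent linear functionals on V, and let β be an alternating bilinear form on V whose restriction to W = ⋂ᵢ ker αᵢ is nondegenerate. Then α₁ ∧ ⋯ ∧ α_k ∧ β^ℓ ≠ 0. -/
/-!
STATEMENT 3: If α₁,…,α_k are linearly independent functionals on a (k+2ℓ)-dimensional
real vector space V and β is an alternating bilinear form whose restriction to
W = ⋂ᵢ ker αᵢ is nondegenerate, then α₁ ∧ ⋯ ∧ α_k ∧ β^ℓ ≠ 0.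
The wedge α₁ ∧ ⋯ ∧ α_k ∧ β^ℓ is expressed (up to a nonzero combinatorial constant,
irrelevant for nonvanishing) by its evaluation on tuples of vectors, a sum over
permutations; nonvanishing means some tuple evaluates to a nonzero number.
-/

/-- Evaluation (up to a nonzero combinatorial normalization) of the form
`α₁ ∧ ⋯ ∧ α_k ∧ β^ℓ` on a tuple of `k + 2ℓ` vectors. -/
noncomputable def wedgeEval (V : Type*) (k ℓ : ℕ) (α : Fin k → V → ℝ) (β : V → V → ℝ)
    (v : Fin (k + 2 * ℓ) → V) : ℝ :=
  ∑ σ : Equiv.Perm (Fin (k + 2 * ℓ)),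
    ((Equiv.Perm.sign σ : ℤ) : ℝ) *
      ((∏ i : Fin k, α i (v (σ ⟨i.1, by have := i.2; omega⟩))) *
        ∏ j : Fin ℓ, β (v (σ ⟨k + 2 * j.1, by have := j.2; omega⟩))
            (v (σ ⟨k + 2 * j.1 + 1, by have := j.2; omega⟩)))

open Module LinearMap

lemma exists_dual_family {V : Type*} [AddCommGroup V] [Module ℝ V]
    (k : ℕ) (α : Fin k → Module.Dual ℝ V) (hα : LinearIndependent ℝ α) :
    Function.Surjective (LinearMap.pi α : V →ₗ[ℝ] (Fin k → ℝ)) := by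
  rw [← LinearMap.range_eq_top]
  by_contra hn
  obtain ⟨g, hg0, hg⟩ := Submodule.exists_dual_map_eq_bot_of_lt_top
      (p := LinearMap.range (LinearMap.pi α : V →ₗ[ℝ] (Fin k → ℝ)))
      (lt_top_iff_ne_top.mpr hn) inferInstance
  have hker : ∀ v : V, g (fun i => α i v) = 0 := by
    intro v
    have : g ((LinearMap.pi α : V →ₗ[ℝ] (Fin k → ℝ)) v) ∈
        Submodule.map g (LinearMap.range (LinearMap.pi α : V →ₗ[ℝ] (Fin k → ℝ))) :=
      Submodule.mem_map_of_mem (LinearMap.mem_range_self _ v)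
    rw [hg] at this
    exact (by simpa using this : g ((LinearMap.pi α : V →ₗ[ℝ] (Fin k → ℝ)) v) = 0)
  have hc : ∀ i : Fin k, g (fun j => if i = j then (1:ℝ) else 0) = 0 := by
    have hz : (∑ i : Fin k, g (fun j => if i = j then (1:ℝ) else 0) • α i) = 0 := by
      ext v
      have := hker v
      rw [LinearMap.pi_apply_eq_sum_univ g (fun i => α i v)] at this
      simpa [mul_comm, smul_eq_mul] using this
    exact fun i => (linearIndependent_iff'.mp hα Finset.univ _ hz i (Finset.mem_univ i))
  apply hg0
  have : ∀ x : Fin k → ℝ, g x = 0 := by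
    intro x
    rw [LinearMap.pi_apply_eq_sum_univ g x]
    simp [hc]
  exact LinearMap.ext this

open Module LinearMap

lemma exists_symplectic_family :
    ∀ (ℓ : ℕ) (W : Type*) [AddCommGroup W] [Module ℝ W] [FiniteDimensional ℝ W]
      (B : W →ₗ[ℝ] W →ₗ[ℝ] ℝ), Module.finrank ℝ W = 2 * ℓ →
      (∀ x, B x x = 0) → (∀ x, (∀ y, B x y = 0) → x = 0) →
      ∃ e f : Fin ℓ → W, (∀ i j, B (e i) (e j) = 0) ∧ (∀ i j, B (f i) (f j) = 0) ∧
        (∀ i j, B (e i) (f j) = if i = j then 1 else 0) := by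
  intro ℓ
  induction ℓ with
  | zero =>
    intro W _ _ _ B _ _ _
    exact ⟨Fin.elim0, Fin.elim0, fun i => i.elim0, fun i => i.elim0, fun i => i.elim0⟩
  | succ ℓ ih =>
    intro W _ _ _ B hd halt hnd
    have skew : ∀ a b : W, B a b = -B b a := by
      intro a b
      have h := halt (a + b)
      simp only [map_add, LinearMap.add_apply, halt] at h
      linarith
    have hnt : Nontrivial W :=
      Module.nontrivial_of_finrank_pos (R := ℝ) (by omega)
    obtain ⟨x, hx⟩ := exists_ne (0 : W)
    obtain ⟨y, hy⟩ : ∃ y, B x y ≠ 0 := by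
      by_contra h
      push_neg at h
      exact hx (hnd x h)
    set f₁ : W := (B x y)⁻¹ • y with hf₁def
    have hxf : B x f₁ = 1 := by
      rw [hf₁def, map_smul, smul_eq_mul, inv_mul_cancel₀ hy]
    have hfx : B f₁ x = -1 := by rw [skew, hxf]
    set φ : W →ₗ[ℝ] ℝ × ℝ := (B x).prod (B f₁) with hφdef
    have hφsurj : Function.Surjective φ := by
      intro p
      refine ⟨p.1 • f₁ - p.2 • x, ?_⟩
      simp only [hφdef, LinearMap.prod_apply, Pi.prod, map_sub, map_smul, smul_eq_mul,
        halt, hxf, hfx]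
      ext <;> simp [halt, hxf, hfx] <;> ring
    have hker : Module.finrank ℝ (LinearMap.ker φ) = 2 * ℓ := by
      have h1 := LinearMap.finrank_range_add_finrank_ker φ
      rw [LinearMap.range_eq_top.mpr hφsurj, finrank_top] at h1
      have h2 : Module.finrank ℝ (ℝ × ℝ) = 2 := by
        simp [Module.finrank_prod]
      omega
    set W' := LinearMap.ker φ with hW'def
    have hmem : ∀ w : W', B x w.val = 0 ∧ B f₁ w.val = 0 := by
      intro w
      have hw : φ w.val = 0 := w.2
      have : (B x w.val, B f₁ w.val) = ((0:ℝ), (0:ℝ)) := hw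
      exact ⟨congrArg Prod.fst this, congrArg Prod.snd this⟩
    set B' : W' →ₗ[ℝ] W' →ₗ[ℝ] ℝ := B.compl₁₂ W'.subtype W'.subtype with hB'def
    have halt' : ∀ x' : W', B' x' x' = 0 := fun x' => halt x'.val
    have hnd' : ∀ x' : W', (∀ y' : W', B' x' y' = 0) → x' = 0 := by
      intro x' h'
      have : ∀ z : W, B x'.val z = 0 := by
        intro z
        set a : ℝ := -(B f₁ z) with ha
        set b : ℝ := B x z with hb
        have hz' : z - a • x - b • f₁ ∈ W' := by
          show φ (z - a • x - b • f₁) = 0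
          show (B x (z - a • x - b • f₁), B f₁ (z - a • x - b • f₁)) = (0 : ℝ × ℝ)
          simp only [map_sub, map_smul, smul_eq_mul, halt, hxf, hfx, ha, hb]
          ext <;> simp <;> ring
        have h1 : B x'.val (z - a • x - b • f₁) = 0 := h' ⟨_, hz'⟩
        have h2 : B x'.val x = 0 := by rw [skew, (hmem x').1, neg_zero]
        have h3 : B x'.val f₁ = 0 := by rw [skew, (hmem x').2, neg_zero]
        have := h1
        simp only [map_sub, map_smul, smul_eq_mul, h2, h3, mul_zero, sub_zero] at this
        exact this
      exact Subtype.ext (hnd x'.val this)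
    obtain ⟨e', f', hee, hff, hef⟩ := ih W' B' hker halt' hnd'
    refine ⟨Fin.cons x (fun i => (e' i).val), Fin.cons f₁ (fun i => (f' i).val), ?_, ?_, ?_⟩
    · intro i j
      refine Fin.cases ?_ (fun i => ?_) i <;> refine Fin.cases ?_ (fun j => ?_) j
      · simp [halt]
      · simp [(hmem _).1]
      · simp [skew (e' _).val x, (hmem _).1]
      · simp only [Fin.cons_succ]; exact hee i j
    · intro i j
      refine Fin.cases ?_ (fun i => ?_) i <;> refine Fin.cases ?_ (fun j => ?_) j
      · simp [halt]
      · simp [(hmem _).2]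
      · simp [skew (f' _).val f₁, (hmem _).2]
      · simp only [Fin.cons_succ]; exact hff i j
    · intro i j
      refine Fin.cases ?_ (fun i => ?_) i <;> refine Fin.cases ?_ (fun j => ?_) j
      · simp [hxf]
      · simp [(hmem _).1, (hmem _).2, Ne.symm (Fin.succ_ne_zero j)]
      · simp [skew (e' _).val f₁, (hmem _).1, (hmem _).2, Fin.succ_ne_zero]
      · simp only [Fin.cons_succ, Fin.succ_inj]; exact hef i j

open Equiv Equiv.Perm

lemma perm_fin_two_classify : ∀ c : Equiv.Perm (Fin 2), c = 1 ∨ c = Equiv.swap 0 1 := by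
  decide

lemma perm_fin_two_key (c : Equiv.Perm (Fin 2)) :
    ((Equiv.Perm.sign c : ℤ) : ℝ) * ((((c 1 : Fin 2) : ℕ) : ℝ) - (((c 0 : Fin 2) : ℕ) : ℝ)) = 1 := by
  rcases perm_fin_two_classify c with h | h <;> subst h <;>
      simp [Equiv.swap_apply_left, Equiv.swap_apply_right] <;> norm_num

lemma core_sum (ℓ : ℕ) {V : Type*} [AddCommGroup V] [Module ℝ V]
    (β : V →ₗ[ℝ] V →ₗ[ℝ] ℝ) (w : Fin ℓ × Fin 2 → V)
    (hw : ∀ a b, β (w a) (w b) =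
      if a.1 = b.1 then (((b.2 : ℕ) : ℝ) - ((a.2 : ℕ) : ℝ)) else 0) :
    ∑ ρ : Equiv.Perm (Fin ℓ × Fin 2), ((Equiv.Perm.sign ρ : ℤ) : ℝ) *
        ∏ j : Fin ℓ, β (w (ρ (j, 0))) (w (ρ (j, 1)))
      = (Fintype.card (Equiv.Perm (Fin ℓ) × (Fin ℓ → Equiv.Perm (Fin 2))) : ℝ) := by
  classical
  set F : Equiv.Perm (Fin ℓ × Fin 2) → ℝ := fun ρ =>
    ((Equiv.Perm.sign ρ : ℤ) : ℝ) * ∏ j : Fin ℓ, β (w (ρ (j, 0))) (w (ρ (j, 1))) with hF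
  set Φ : Equiv.Perm (Fin ℓ) × (Fin ℓ → Equiv.Perm (Fin 2)) → Equiv.Perm (Fin ℓ × Fin 2) :=
    fun pc => (Equiv.prodCongrRight pc.2).trans
      (Equiv.prodCongrLeft (fun _ : Fin 2 => pc.1)) with hΦ
  have hΦapp : ∀ pc (j : Fin ℓ) (r : Fin 2), Φ pc (j, r) = (pc.1 j, pc.2 j r) := by
    intro pc j r
    rfl
  have hΦinj : Function.Injective Φ := by
    intro pc pc' h
    have h1 : ∀ j r, (pc.1 j, pc.2 j r) = (pc'.1 j, pc'.2 j r) := by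
      intro j r
      rw [← hΦapp, ← hΦapp, h]
    obtain ⟨π, c⟩ := pc
    obtain ⟨π', c'⟩ := pc'
    have hπ : π = π' := Equiv.ext fun j => congrArg Prod.fst (h1 j 0)
    have hc : c = c' := funext fun j => Equiv.ext fun r => congrArg Prod.snd (h1 j r)
    rw [Prod.mk.injEq]
    exact ⟨hπ, hc⟩
  -- off-image vanishing
  have hvan : ∀ ρ ∈ Finset.univ, ρ ∉ Finset.image Φ Finset.univ → F ρ = 0 := by
    intro ρ _ hρ
    by_contra hne
    apply hρ
    have hprod : ∀ j : Fin ℓ, β (w (ρ (j, 0))) (w (ρ (j, 1))) ≠ 0 := by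
      intro j hj
      apply hne
      rw [hF]
      simp only
      rw [Finset.prod_eq_zero (Finset.mem_univ j) hj, mul_zero]
    have hfst : ∀ j : Fin ℓ, (ρ (j, 0)).1 = (ρ (j, 1)).1 := by
      intro j
      by_contra hne'
      exact hprod j (by rw [hw, if_neg hne'])
    have hsnd : ∀ j : Fin ℓ, (ρ (j, 0)).2 ≠ (ρ (j, 1)).2 := by
      intro j h
      have : ρ (j, 0) = ρ (j, 1) := Prod.ext (hfst j) h
      have := ρ.injective this
      simp at this
    -- build π
    have hπinj : Function.Injective (fun j : Fin ℓ => (ρ (j, 0)).1) := by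
      intro j j' h
      simp only at h
      -- the four values in a fiber of size two
      have hvals : ∀ r : Fin 2, (ρ (j, r)).1 = (ρ (j', 0)).1 := by
        intro r
        rcases (by omega : r.val = 0 ∨ r.val = 1) with hr | hr
        · have : r = 0 := Fin.ext hr
          rw [this, h]
        · have : r = 1 := Fin.ext hr
          rw [this, ← hfst j, h]
      -- ρ (j,0) equals ρ (j',0) or ρ (j',1) since both live in the 2-elt fiber
      have h2 : (ρ (j, 0)).2 = (ρ (j', 0)).2 ∨ (ρ (j, 0)).2 = (ρ (j', 1)).2 := by
        have a := hsnd j'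
        have b : ∀ x : Fin 2, x = (ρ (j', 0)).2 ∨ x = (ρ (j', 1)).2 := by
          intro x
          omega
        exact b _
      rcases h2 with h2 | h2
      · have : ρ (j, 0) = ρ (j', 0) := Prod.ext (hvals 0) h2
        exact (Prod.mk.injEq _ _ _ _).mp (ρ.injective this) |>.1
      · have : ρ (j, 0) = ρ (j', 1) := Prod.ext (by rw [hvals 0, hfst j']) h2
        exact (Prod.mk.injEq _ _ _ _).mp (ρ.injective this) |>.1
    set π : Equiv.Perm (Fin ℓ) :=
      Equiv.ofBijective _ (Finite.injective_iff_bijective.mp hπinj) with hπ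
    have hπapp : ∀ j, π j = (ρ (j, 0)).1 := fun j => rfl
    have hcinj : ∀ j : Fin ℓ, Function.Injective (fun r : Fin 2 => (ρ (j, r)).2) := by
      intro j r r' h
      simp only at h
      by_contra hrr
      have h01 : (r = 0 ∧ r' = 1) ∨ (r = 1 ∧ r' = 0) := by omega
      rcases h01 with ⟨h1, h2⟩ | ⟨h1, h2⟩ <;> subst h1 <;> subst h2
      · exact hsnd j h
      · exact hsnd j h.symm
    set c : Fin ℓ → Equiv.Perm (Fin 2) := fun j =>
      Equiv.ofBijective _ (Finite.injective_iff_bijective.mp (hcinj j)) with hc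
    have hcapp : ∀ j r, c j r = (ρ (j, r)).2 := fun j r => rfl
    refine Finset.mem_image.mpr ⟨(π, c), Finset.mem_univ _, ?_⟩
    refine Equiv.ext ?_
    rintro ⟨j, r⟩
    rw [hΦapp]
    refine (Prod.ext ?_ ?_)
    · rcases (by omega : r.val = 0 ∨ r.val = 1) with hr | hr
      · have : r = 0 := Fin.ext hr
        subst this
        exact hπapp j
      · have : r = 1 := Fin.ext hr
        subst this
        rw [hπapp j, hfst j]
    · exact (hcapp j r)
  have step1 : ∑ ρ : Equiv.Perm (Fin ℓ × Fin 2), F ρ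
      = ∑ ρ ∈ Finset.image Φ Finset.univ, F ρ :=
    (Finset.sum_subset (Finset.subset_univ _) hvan).symm
  have step2 : ∑ ρ ∈ Finset.image Φ Finset.univ, F ρ
      = ∑ pc : Equiv.Perm (Fin ℓ) × (Fin ℓ → Equiv.Perm (Fin 2)), F (Φ pc) :=
    Finset.sum_image (fun x _ y _ h => hΦinj h)
  have step3 : ∀ pc : Equiv.Perm (Fin ℓ) × (Fin ℓ → Equiv.Perm (Fin 2)), F (Φ pc) = 1 := by
    intro ⟨π, c⟩
    rw [hF]
    simp only
    have hsign : Equiv.Perm.sign (Φ (π, c)) = ∏ j : Fin ℓ, Equiv.Perm.sign (c j) := by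
      have : Φ (π, c) = (Equiv.prodCongrLeft (fun _ : Fin 2 => π))
          * (Equiv.prodCongrRight c) := rfl
      rw [this, map_mul, Equiv.Perm.sign_prodCongrLeft, Equiv.Perm.sign_prodCongrRight]
      have : (∏ _k : Fin 2, Equiv.Perm.sign π) = 1 := by
        rw [Finset.prod_const]
        simp [Int.units_sq]
      rw [this, one_mul]
    have hterm : ∀ j : Fin ℓ, β (w (Φ (π, c) (j, 0))) (w (Φ (π, c) (j, 1)))
        = (((c j 1 : Fin 2) : ℕ) : ℝ) - (((c j 0 : Fin 2) : ℕ) : ℝ) := by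
      intro j
      rw [hΦapp, hΦapp, hw]
      simp
    rw [hsign]
    calc ((((∏ j : Fin ℓ, Equiv.Perm.sign (c j)) : ℤˣ) : ℤ) : ℝ) *
          ∏ j : Fin ℓ, β (w (Φ (π, c) (j, 0))) (w (Φ (π, c) (j, 1)))
        = (∏ j : Fin ℓ, ((Equiv.Perm.sign (c j) : ℤ) : ℝ)) *
          ∏ j : Fin ℓ, ((((c j 1 : Fin 2) : ℕ) : ℝ) - (((c j 0 : Fin 2) : ℕ) : ℝ)) := by
          rw [Finset.prod_congr rfl (fun j _ => hterm j)]
          push_cast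
          ring
      _ = ∏ j : Fin ℓ, (((Equiv.Perm.sign (c j) : ℤ) : ℝ) *
            ((((c j 1 : Fin 2) : ℕ) : ℝ) - (((c j 0 : Fin 2) : ℕ) : ℝ))) := by
          rw [Finset.prod_mul_distrib]
      _ = 1 := by
          rw [Finset.prod_congr rfl (fun j _ => perm_fin_two_key (c j))]
          exact Finset.prod_const_one
  rw [show (∑ ρ : Equiv.Perm (Fin ℓ × Fin 2), ((Equiv.Perm.sign ρ : ℤ) : ℝ) *
        ∏ j : Fin ℓ, β (w (ρ (j, 0))) (w (ρ (j, 1)))) = ∑ ρ, F ρ from rfl,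
    step1, step2, Finset.sum_congr rfl (fun pc _ => step3 pc), Finset.sum_const]
  rw [Finset.card_univ, nsmul_eq_mul, mul_one]

open Module LinearMap Equiv in
theorem kCosymplectic_of_nondegenerate_on_kernel
    (V : Type*) [AddCommGroup V] [Module ℝ V] [FiniteDimensional ℝ V]
    (k ℓ : ℕ) (hdim : Module.finrank ℝ V = k + 2 * ℓ)
    (α : Fin k → Module.Dual ℝ V) (hα : LinearIndependent ℝ α)
    (β : V →ₗ[ℝ] V →ₗ[ℝ] ℝ) (hβalt : ∀ v : V, β v v = 0)
    (hβnd : ∀ w ∈ ⨅ i, LinearMap.ker (α i),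
      (∀ w' ∈ ⨅ i, LinearMap.ker (α i), β w w' = 0) → w = 0) :
    ∃ v : Fin (k + 2 * ℓ) → V,
      wedgeEval V k ℓ (fun i u => α i u) (fun a b => β a b) v ≠ 0 := by
  classical
  have hsurj := exists_dual_family k α hα
  choose uu huu using fun j : Fin k => hsurj (Pi.single j 1)
  have hu : ∀ i j : Fin k, α i (uu j) = if i = j then 1 else 0 := by
    intro i j
    have h1 : (LinearMap.pi α : V →ₗ[ℝ] (Fin k → ℝ)) (uu j) i
        = (Pi.single j (1:ℝ) : Fin k → ℝ) i := by
      rw [huu j]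
    rw [LinearMap.pi_apply] at h1
    rw [h1, Pi.single_apply]
  set W := ⨅ i, LinearMap.ker (α i) with hWdef
  have hWrank : Module.finrank ℝ ↥W = 2 * ℓ := by
    have h1 := LinearMap.finrank_range_add_finrank_ker (LinearMap.pi α : V →ₗ[ℝ] (Fin k → ℝ))
    rw [LinearMap.range_eq_top.mpr hsurj, finrank_top, LinearMap.ker_pi, hdim] at h1
    have h2 : Module.finrank ℝ (Fin k → ℝ) = k := by
      rw [Module.finrank_fintype_fun_eq_card, Fintype.card_fin]
    rw [h2, ← hWdef] at h1
    omega
  set βW : ↥W →ₗ[ℝ] ↥W →ₗ[ℝ] ℝ := β.compl₁₂ W.subtype W.subtype with hβW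
  obtain ⟨eb, fb, hee, hff, hef⟩ := exists_symplectic_family ℓ ↥W βW hWrank
    (fun x => hβalt x.val)
    (fun x h => Subtype.ext (hβnd x.val x.2 (fun w' hw' => h ⟨w', hw'⟩)))
  have skew : ∀ a b : V, β a b = -β b a := by
    intro a b
    have h := hβalt (a + b)
    simp only [map_add, LinearMap.add_apply, hβalt] at h
    linarith
  set Wsym : Fin ℓ × Fin 2 → V := fun p => if (p.2 : ℕ) = 0 then (eb p.1).val else (fb p.1).val
    with hWsym
  have hWsym0 : ∀ j : Fin ℓ, Wsym (j, 0) = (eb j).val := by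
    intro j; simp [hWsym]
  have hWsym1 : ∀ j : Fin ℓ, Wsym (j, 1) = (fb j).val := by
    intro j; simp [hWsym]
  have hWsymMem : ∀ p, Wsym p ∈ W := by
    intro p
    simp only [hWsym]
    split
    · exact (eb p.1).2
    · exact (fb p.1).2
  have hαW : ∀ (i : Fin k) (x : V), x ∈ W → α i x = 0 := by
    intro i x hx
    rw [hWdef, Submodule.mem_iInf] at hx
    exact LinearMap.mem_ker.mp (hx i)
  have hval : ∀ a b : Fin ℓ × Fin 2, β (Wsym a) (Wsym b) =
      if a.1 = b.1 then (((b.2 : ℕ) : ℝ) - ((a.2 : ℕ) : ℝ)) else 0 := by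
    rintro ⟨ja, ra⟩ ⟨jb, rb⟩
    rcases (by omega : ra = 0 ∨ ra = 1) with h | h <;>
      rcases (by omega : rb = 0 ∨ rb = 1) with h' | h' <;> subst h <;> subst h'
    · rw [hWsym0, hWsym0, show β (eb ja).val (eb jb).val = βW (eb ja) (eb jb) from rfl,
        hee ja jb]
      norm_num
    · rw [hWsym0, hWsym1, show β (eb ja).val (fb jb).val = βW (eb ja) (fb jb) from rfl,
        hef ja jb]
      rcases eq_or_ne ja jb with h | h
      · subst h; norm_num
      · rw [if_neg h, if_neg h]
    · rw [hWsym1, hWsym0, skew,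
        show β (eb jb).val (fb ja).val = βW (eb jb) (fb ja) from rfl, hef jb ja]
      rcases eq_or_ne ja jb with h | h
      · subst h; norm_num
      · rw [if_neg (Ne.symm h), if_neg h]
        norm_num
    · rw [hWsym1, hWsym1, show β (fb ja).val (fb jb).val = βW (fb ja) (fb jb) from rfl,
        hff ja jb]
      norm_num
  -- equivalences
  set e : Fin k ⊕ Fin (2 * ℓ) ≃ Fin (k + 2 * ℓ) := finSumFinEquiv with he
  set e2 : Fin ℓ × Fin 2 ≃ Fin (2 * ℓ) :=
    { toFun := fun p => ⟨2 * p.1.val + p.2.val, by omega⟩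
      invFun := fun m => (⟨m.val / 2, by omega⟩, ⟨m.val % 2, by omega⟩)
      left_inv := by
        rintro ⟨⟨j, hj⟩, ⟨r, hr⟩⟩
        refine Prod.ext (Fin.ext ?_) (Fin.ext ?_) <;> dsimp <;> omega
      right_inv := by
        rintro ⟨m, hm⟩
        apply Fin.ext
        dsimp
        omega } with he2
  set v : Fin (k + 2 * ℓ) → V := fun m => Sum.elim uu (fun r => Wsym (e2.symm r)) (e.symm m)
    with hv
  have hvl : ∀ i : Fin k, v (e (Sum.inl i)) = uu i := by
    intro i
    simp only [hv, Equiv.symm_apply_apply, Sum.elim_inl]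
  have hvr : ∀ p : Fin ℓ × Fin 2, v (e (Sum.inr (e2 p))) = Wsym p := by
    intro p
    simp only [hv, Equiv.symm_apply_apply, Sum.elim_inr]
  -- index identities
  have hidx1 : ∀ (i : Fin k) (h : i.1 < k + 2 * ℓ),
      (⟨i.1, h⟩ : Fin (k + 2 * ℓ)) = e (Sum.inl i) := by
    intro i h
    rw [he, finSumFinEquiv_apply_left]
    apply Fin.ext
    simp
  have hidx2 : ∀ (j : Fin ℓ) (h : k + 2 * j.1 < k + 2 * ℓ),
      (⟨k + 2 * j.1, h⟩ : Fin (k + 2 * ℓ)) = e (Sum.inr (e2 (j, 0))) := by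
    intro j h
    rw [he, finSumFinEquiv_apply_right]
    apply Fin.ext
    simp [he2]
  have hidx3 : ∀ (j : Fin ℓ) (h : k + 2 * j.1 + 1 < k + 2 * ℓ),
      (⟨k + 2 * j.1 + 1, h⟩ : Fin (k + 2 * ℓ)) = e (Sum.inr (e2 (j, 1))) := by
    intro j h
    rw [he, finSumFinEquiv_apply_right]
    apply Fin.ext
    simp [he2]
    try omega
  refine ⟨v, ?_⟩
  set F : Equiv.Perm (Fin (k + 2 * ℓ)) → ℝ := fun σ =>
    ((Equiv.Perm.sign σ : ℤ) : ℝ) *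
      ((∏ i : Fin k, α i (v (σ (e (Sum.inl i))))) *
        ∏ j : Fin ℓ, β (v (σ (e (Sum.inr (e2 (j, 0))))))
          (v (σ (e (Sum.inr (e2 (j, 1))))))) with hF
  have hwe : wedgeEval V k ℓ (fun i u => α i u) (fun a b => β a b) v = ∑ σ, F σ := by
    rw [wedgeEval]
    refine Finset.sum_congr rfl (fun σ _ => ?_)
    rw [hF]
    dsimp only
    simp only [hidx1, hidx2, hidx3]
  -- the injection Ψ
  set Ψ : Equiv.Perm (Fin (2 * ℓ)) → Equiv.Perm (Fin (k + 2 * ℓ)) :=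
    fun τ => e.permCongr (Equiv.sumCongr (1 : Equiv.Perm (Fin k)) τ) with hΨ
  have hΨl : ∀ (τ : Equiv.Perm (Fin (2 * ℓ))) (i : Fin k),
      Ψ τ (e (Sum.inl i)) = e (Sum.inl i) := by
    intro τ i
    simp [hΨ, Equiv.permCongr_apply, Equiv.symm_apply_apply]
  have hΨr : ∀ (τ : Equiv.Perm (Fin (2 * ℓ))) (r : Fin (2 * ℓ)),
      Ψ τ (e (Sum.inr r)) = e (Sum.inr (τ r)) := by
    intro τ r
    simp [hΨ, Equiv.permCongr_apply, Equiv.symm_apply_apply]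
  have hΨinj : Function.Injective Ψ := by
    intro τ τ' h
    refine Equiv.ext (fun r => ?_)
    have h1 : Ψ τ (e (Sum.inr r)) = Ψ τ' (e (Sum.inr r)) := by rw [h]
    rw [hΨr, hΨr] at h1
    simpa using e.injective h1
  have hΨsign : ∀ τ, Equiv.Perm.sign (Ψ τ) = Equiv.Perm.sign τ := by
    intro τ
    rw [hΨ]
    rw [Equiv.Perm.sign_permCongr, Equiv.Perm.sign_sumCongr, Equiv.Perm.sign_one, one_mul]
  -- vanishing off the image of Ψ
  have hvan : ∀ σ ∈ Finset.univ, σ ∉ Finset.image Ψ Finset.univ → F σ = 0 := by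
    intro σ _ hσ
    by_contra hne
    apply hσ
    have hfix : ∀ i : Fin k, σ (e (Sum.inl i)) = e (Sum.inl i) := by
      intro i
      have hi : α i (v (σ (e (Sum.inl i)))) ≠ 0 := by
        intro h0
        apply hne
        rw [hF]
        dsimp only
        rw [Finset.prod_eq_zero (Finset.mem_univ i) h0, zero_mul, mul_zero]
      rcases hs : e.symm (σ (e (Sum.inl i))) with j | r
      · have hv' : v (σ (e (Sum.inl i))) = uu j := by
          rw [hv]; dsimp only; rw [hs]; rfl
        rw [hv', hu] at hi
        by_cases hij : i = j
        · subst hij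
          calc σ (e (Sum.inl i)) = e (e.symm (σ (e (Sum.inl i)))) :=
                (e.apply_symm_apply _).symm
            _ = e (Sum.inl i) := by rw [hs]
        · rw [if_neg hij] at hi; exact absurd rfl hi
      · exfalso
        have hv' : v (σ (e (Sum.inl i))) = Wsym (e2.symm r) := by
          rw [hv]; dsimp only; rw [hs]; rfl
        rw [hv'] at hi
        exact hi (hαW i _ (hWsymMem _))
    have hr : ∀ r : Fin (2 * ℓ), ∃ s, σ (e (Sum.inr r)) = e (Sum.inr s) := by
      intro r
      rcases hs : e.symm (σ (e (Sum.inr r))) with j | s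
      · exfalso
        have h1 : σ (e (Sum.inr r)) = e (Sum.inl j) := by
          calc σ (e (Sum.inr r)) = e (e.symm (σ (e (Sum.inr r)))) :=
                (e.apply_symm_apply _).symm
            _ = e (Sum.inl j) := by rw [hs]
        have h2 := σ.injective (h1.trans (hfix j).symm)
        have h3 := e.injective h2
        simp at h3
      · refine ⟨s, ?_⟩
        calc σ (e (Sum.inr r)) = e (e.symm (σ (e (Sum.inr r)))) :=
              (e.apply_symm_apply _).symm
          _ = e (Sum.inr s) := by rw [hs]
    choose τf hτf using hr
    have hτinj : Function.Injective τf := by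
      intro r r' h
      have h1 : σ (e (Sum.inr r)) = σ (e (Sum.inr r')) := by rw [hτf, hτf, h]
      have h2 := e.injective (σ.injective h1)
      simpa using h2
    set τ : Equiv.Perm (Fin (2 * ℓ)) :=
      Equiv.ofBijective τf (Finite.injective_iff_bijective.mp hτinj) with hτ
    have hτapp : ∀ r, τ r = τf r := fun r => rfl
    refine Finset.mem_image.mpr ⟨τ, Finset.mem_univ _, ?_⟩
    refine Equiv.ext (fun x => ?_)
    have hx : x = e (e.symm x) := (e.apply_symm_apply x).symm
    rcases hxs : e.symm x with i | r
    · have hxe : x = e (Sum.inl i) := by rw [hx, hxs]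
      rw [hxe, hΨl, hfix i]
    · have hxe : x = e (Sum.inr r) := by rw [hx, hxs]
      rw [hxe, hΨr, hτapp, ← hτf r]
  have step1 : (∑ σ, F σ) = ∑ σ ∈ Finset.image Ψ Finset.univ, F σ :=
    (Finset.sum_subset (Finset.subset_univ _) hvan).symm
  have step2 : (∑ σ ∈ Finset.image Ψ Finset.univ, F σ)
      = ∑ τ : Equiv.Perm (Fin (2 * ℓ)), F (Ψ τ) :=
    Finset.sum_image (fun x _ y _ h => hΨinj h)
  set G : Equiv.Perm (Fin (2 * ℓ)) → ℝ := fun τ =>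
    ((Equiv.Perm.sign τ : ℤ) : ℝ) *
      ∏ j : Fin ℓ, β (Wsym (e2.symm (τ (e2 (j, 0))))) (Wsym (e2.symm (τ (e2 (j, 1)))))
    with hG
  have hFΨ : ∀ τ, F (Ψ τ) = G τ := by
    intro τ
    rw [hF, hG]
    dsimp only
    rw [hΨsign]
    have hA : (∏ i : Fin k, α i (v (Ψ τ (e (Sum.inl i))))) = 1 := by
      refine Finset.prod_eq_one (fun i _ => ?_)
      rw [hΨl, hvl, hu, if_pos rfl]
    have hB : ∀ j : Fin ℓ, v (Ψ τ (e (Sum.inr (e2 (j, 0))))) = Wsym (e2.symm (τ (e2 (j, 0))))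
        := by
      intro j
      rw [hΨr]
      rw [hv]; dsimp only; rw [Equiv.symm_apply_apply]; rfl
    have hB' : ∀ j : Fin ℓ, v (Ψ τ (e (Sum.inr (e2 (j, 1))))) = Wsym (e2.symm (τ (e2 (j, 1))))
        := by
      intro j
      rw [hΨr]
      rw [hv]; dsimp only; rw [Equiv.symm_apply_apply]; rfl
    rw [hA, one_mul]
    congr 1
    exact Finset.prod_congr rfl (fun j _ => by rw [hB j, hB' j])
  have step3 : (∑ τ : Equiv.Perm (Fin (2 * ℓ)), G τ)
      = ∑ ρ : Equiv.Perm (Fin ℓ × Fin 2), G (e2.permCongr ρ) :=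
    (Equiv.sum_comp e2.permCongr G).symm
  have step4 : ∀ ρ : Equiv.Perm (Fin ℓ × Fin 2), G (e2.permCongr ρ) =
      ((Equiv.Perm.sign ρ : ℤ) : ℝ) *
        ∏ j : Fin ℓ, β (Wsym (ρ (j, 0))) (Wsym (ρ (j, 1))) := by
    intro ρ
    rw [hG]
    dsimp only
    rw [Equiv.Perm.sign_permCongr]
    congr 1
    refine Finset.prod_congr rfl (fun j _ => ?_)
    simp only [Equiv.permCongr_apply, Equiv.symm_apply_apply]
  have hcore := core_sum ℓ β Wsym hval
  rw [hwe, step1, step2, Finset.sum_congr rfl (fun τ _ => hFΨ τ), step3,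
    Finset.sum_congr rfl (fun ρ _ => step4 ρ), hcore]
  exact Nat.cast_ne_zero.mpr Fintype.card_ne_zero
end

section
/- Let Z be a smooth manifold and define a cochain complex whose degree-p part is Ω^{p−2}(Z)⁶ ⊕ Ω^{p−1}(Z)⁴ (components A₀₀,A₁₀,A₀₁,A₂₀,A₀₂,A₁₁,B₀,B₁,C₀,C₁) with differential sending this tuple to the degree-(p+1) tuple (dA₀₀, dA₁₀+B₀, dA₀₁−C₀, dA₂₀+B₁, dA₀₂−C₁, dA₁₁, −dB₀, −dB₁, −dC₀, −dC₁, …) as in the singular part of the B_i-complex. Then the degree-p cohomology of this complex is isomorphic to H^{p−2}(Z) ⊕ H^{p−2}(Z), detected by the classes [A₀₀] and [A₁₁]. -/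
/-!
STATEMENT 11: The quotient complex whose degree-p part is Ω^{p−2}(Z)⁶ ⊕ Ω^{p−1}(Z)⁴
(components A₀₀,A₁₀,A₀₁,A₂₀,A₀₂,A₁₁ and B₀,B₁,C₀,C₁), with differential
(A,B,C) ↦ (dA₀₀, dA₁₀+B₀, dA₀₁−C₀, dA₂₀+B₁, dA₀₂−C₁, dA₁₁, −dB₀, −dB₁, −dC₀, −dC₁),
has degree-p cohomology isomorphic to H^{p−2}(Z) ⊕ H^{p−2}(Z), detected by [A₀₀], [A₁₁].
We abstract the de Rham complex of Z to four consecutive terms M0 → M1 → M2 → M3,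
modeling Ω^{p−3}(Z), Ω^{p−2}(Z), Ω^{p−1}(Z), Ω^p(Z); the degree-p part of the quotient
complex is (Fin 6 → M1) × (Fin 4 → M2), with A-components indexed
0 ↦ A₀₀, 1 ↦ A₁₀, 2 ↦ A₀₁, 3 ↦ A₂₀, 4 ↦ A₀₂, 5 ↦ A₁₁ and B,C-components indexed
0 ↦ B₀, 1 ↦ B₁, 2 ↦ C₀, 3 ↦ C₁; and H^{p−2}(Z) = ker d₁ / im d₀.
-/

/-- One step of the quotient complex. -/
noncomputable def DstepB {A B C : Type*} [AddCommGroup A] [AddCommGroup B] [AddCommGroup C]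
    [Module ℝ A] [Module ℝ B] [Module ℝ C]
    (dA : A →ₗ[ℝ] B) (dB : B →ₗ[ℝ] C) :
    ((Fin 6 → A) × (Fin 4 → B)) →ₗ[ℝ] ((Fin 6 → B) × (Fin 4 → C)) :=
  let pA : Fin 6 → (((Fin 6 → A) × (Fin 4 → B)) →ₗ[ℝ] A) :=
    fun i => (LinearMap.proj i) ∘ₗ (LinearMap.fst ℝ (Fin 6 → A) (Fin 4 → B))
  let pB : Fin 4 → (((Fin 6 → A) × (Fin 4 → B)) →ₗ[ℝ] B) :=
    fun j => (LinearMap.proj j) ∘ₗ (LinearMap.snd ℝ (Fin 6 → A) (Fin 4 → B))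
  (LinearMap.pi
      ![dA ∘ₗ pA 0, dA ∘ₗ pA 1 + pB 0, dA ∘ₗ pA 2 - pB 2,
        dA ∘ₗ pA 3 + pB 1, dA ∘ₗ pA 4 - pB 3, dA ∘ₗ pA 5]).prod
    (LinearMap.pi fun j => -(dB ∘ₗ pB j))


@[simp] lemma vec6_five {α : Type*} (a b c d e f : α) : ![a,b,c,d,e,f] 5 = f := rfl

lemma DstepB_apply {A B C : Type*} [AddCommGroup A] [AddCommGroup B] [AddCommGroup C]
    [Module ℝ A] [Module ℝ B] [Module ℝ C]
    (dA : A →ₗ[ℝ] B) (dB : B →ₗ[ℝ] C) (x : (Fin 6 → A) × (Fin 4 → B)) :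
    DstepB dA dB x =
      (![dA (x.1 0), dA (x.1 1) + x.2 0, dA (x.1 2) - x.2 2,
         dA (x.1 3) + x.2 1, dA (x.1 4) - x.2 3, dA (x.1 5)],
       fun j => -dB (x.2 j)) := by
  refine Prod.ext ?_ ?_
  · funext i
    fin_cases i <;> simp [DstepB]
  · funext j
    simp [DstepB]

lemma mem_ker_DstepB {A B C : Type*} [AddCommGroup A] [AddCommGroup B] [AddCommGroup C]
    [Module ℝ A] [Module ℝ B] [Module ℝ C]
    (dA : A →ₗ[ℝ] B) (dB : B →ₗ[ℝ] C) (x : (Fin 6 → A) × (Fin 4 → B)) :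
    x ∈ LinearMap.ker (DstepB dA dB) ↔
      (dA (x.1 0) = 0 ∧ dA (x.1 1) + x.2 0 = 0 ∧ dA (x.1 2) - x.2 2 = 0 ∧
       dA (x.1 3) + x.2 1 = 0 ∧ dA (x.1 4) - x.2 3 = 0 ∧ dA (x.1 5) = 0 ∧
       ∀ j, dB (x.2 j) = 0) := by
  rw [LinearMap.mem_ker, DstepB_apply, Prod.ext_iff]
  constructor
  · rintro ⟨h1, h2⟩
    have g : ∀ i : Fin 6, ![dA (x.1 0), dA (x.1 1) + x.2 0, dA (x.1 2) - x.2 2,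
        dA (x.1 3) + x.2 1, dA (x.1 4) - x.2 3, dA (x.1 5)] i = 0 := fun i =>
      congrFun h1 i
    have g2 : ∀ j : Fin 4, dB (x.2 j) = 0 := fun j => by
      have := congrFun h2 j
      simpa [neg_eq_zero] using this
    exact ⟨g 0, g 1, g 2, g 3, g 4, g 5, g2⟩
  · rintro ⟨h0, h1, h2, h3, h4, h5, h6⟩
    constructor
    · funext i
      fin_cases i <;> simp [h0, h1, h2, h3, h4, h5]
    · funext j
      simp [h6 j]


set_option maxHeartbeats 2000000 in
theorem quotient_complex_cohomology_two_copies
    (M0 M1 M2 M3 : Type*)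
    [AddCommGroup M0] [AddCommGroup M1] [AddCommGroup M2] [AddCommGroup M3]
    [Module ℝ M0] [Module ℝ M1] [Module ℝ M2] [Module ℝ M3]
    (d0 : M0 →ₗ[ℝ] M1) (d1 : M1 →ₗ[ℝ] M2) (d2 : M2 →ₗ[ℝ] M3)
    (h10 : d1 ∘ₗ d0 = 0) (h21 : d2 ∘ₗ d1 = 0) :
    Nonempty
      ((↥(LinearMap.ker (DstepB d1 d2)) ⧸
          (LinearMap.range (DstepB d0 d1)).comap (LinearMap.ker (DstepB d1 d2)).subtype)
        ≃ₗ[ℝ]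
       ((↥(LinearMap.ker d1) ⧸
          (LinearMap.range d0).comap (LinearMap.ker d1).subtype) ×
        (↥(LinearMap.ker d1) ⧸
          (LinearMap.range d0).comap (LinearMap.ker d1).subtype))) := by
  classical
  set H := (↥(LinearMap.ker d1) ⧸
      (LinearMap.range d0).comap (LinearMap.ker d1).subtype) with hH
  have mem0 : ∀ x : ↥(LinearMap.ker (DstepB d1 d2)), x.1.1 0 ∈ LinearMap.ker d1 :=
    fun x => ((mem_ker_DstepB d1 d2 x.1).1 x.2).1
  have mem5 : ∀ x : ↥(LinearMap.ker (DstepB d1 d2)), x.1.1 5 ∈ LinearMap.ker d1 :=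
    fun x => ((mem_ker_DstepB d1 d2 x.1).1 x.2).2.2.2.2.2.1
  let f : ↥(LinearMap.ker (DstepB d1 d2)) →ₗ[ℝ] H × H :=
    { toFun := fun x =>
        (Submodule.Quotient.mk ⟨x.1.1 0, mem0 x⟩,
         Submodule.Quotient.mk ⟨x.1.1 5, mem5 x⟩)
      map_add' := fun x y => by
        refine Prod.ext ?_ ?_ <;>
        · show _ = _ + _
          rw [← Submodule.Quotient.mk_add]
          rfl
      map_smul' := fun c x => by
        refine Prod.ext ?_ ?_ <;>
        · show _ = c • _
          rw [← Submodule.Quotient.mk_smul]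
          rfl }
  have hsurj : Function.Surjective f := by
    rintro ⟨q1, q2⟩
    obtain ⟨a, rfl⟩ := Submodule.Quotient.mk_surjective _ q1
    obtain ⟨b, rfl⟩ := Submodule.Quotient.mk_surjective _ q2
    refine ⟨⟨(![(a : M1), 0, 0, 0, 0, (b : M1)], 0), ?_⟩, ?_⟩
    · rw [mem_ker_DstepB]
      refine ⟨?_, ?_, ?_, ?_, ?_, ?_, ?_⟩ <;> simp [a.2, b.2]
    · refine Prod.ext ?_ ?_ <;>
      · show Submodule.Quotient.mk _ = Submodule.Quotient.mk _
        apply congrArg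
        apply Subtype.ext
        simp
  have hkerf : LinearMap.ker f =
      (LinearMap.range (DstepB d0 d1)).comap (LinearMap.ker (DstepB d1 d2)).subtype := by
    ext x
    obtain ⟨h0, h1, h2, h3, h4, h5, h6⟩ := (mem_ker_DstepB d1 d2 x.1).1 x.2
    rw [LinearMap.mem_ker, Submodule.mem_comap]
    constructor
    · intro hfx
      have hq1 : (Submodule.Quotient.mk (⟨x.1.1 0, mem0 x⟩ : LinearMap.ker d1) : H) = 0 :=
        congrArg Prod.fst hfx
      have hq2 : (Submodule.Quotient.mk (⟨x.1.1 5, mem5 x⟩ : LinearMap.ker d1) : H) = 0 :=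
        congrArg Prod.snd hfx
      rw [Submodule.Quotient.mk_eq_zero, Submodule.mem_comap] at hq1 hq2
      obtain ⟨u, hu⟩ := hq1
      obtain ⟨v, hv⟩ := hq2
      refine ⟨(![u, 0, 0, 0, 0, v], ![x.1.1 1, x.1.1 3, -(x.1.1 2), -(x.1.1 4)]), ?_⟩
      rw [DstepB_apply]
      refine Prod.ext ?_ ?_
      · funext i
        fin_cases i <;> simp [hu, hv]
      · funext j
        have e0 : x.1.2 0 = -(d1 (x.1.1 1)) := (neg_eq_of_add_eq_zero_right h1).symm
        have e1 : x.1.2 1 = -(d1 (x.1.1 3)) := (neg_eq_of_add_eq_zero_right h3).symm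
        have e2 : x.1.2 2 = d1 (x.1.1 2) := (sub_eq_zero.mp h2).symm
        have e3 : x.1.2 3 = d1 (x.1.1 4) := (sub_eq_zero.mp h4).symm
        fin_cases j <;> simp [e0, e1, e2, e3]
    · rintro ⟨y, hy⟩
      rw [DstepB_apply] at hy
      have hy' : (![d0 (y.1 0), d0 (y.1 1) + y.2 0, d0 (y.1 2) - y.2 2,
          d0 (y.1 3) + y.2 1, d0 (y.1 4) - y.2 3, d0 (y.1 5)] : Fin 6 → M1) = x.1.1 :=
        congrArg Prod.fst hy
      have hA0 : x.1.1 0 = d0 (y.1 0) := (congrFun hy' 0).symm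
      have hA5 : x.1.1 5 = d0 (y.1 5) := (congrFun hy' 5).symm
      refine Prod.ext ?_ ?_
      · show (Submodule.Quotient.mk (⟨x.1.1 0, mem0 x⟩ : LinearMap.ker d1) : H) = 0
        rw [Submodule.Quotient.mk_eq_zero, Submodule.mem_comap]
        exact ⟨y.1 0, hA0.symm⟩
      · show (Submodule.Quotient.mk (⟨x.1.1 5, mem5 x⟩ : LinearMap.ker d1) : H) = 0
        rw [Submodule.Quotient.mk_eq_zero, Submodule.mem_comap]
        exact ⟨y.1 5, hA5.symm⟩
  exact ⟨(Submodule.quotEquivOfEq _ _ hkerf.symm).trans (f.quotKerEquivOfSurjective hsurj)⟩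
end
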